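/- arXiv:1905.02603 — 2 statements merged into one kernel-verified Lean document; each statement's English description precedes it below -/
import Mathlib

section
/- Let G be a finite connected weighted graph with more than one vertex and Ψ(f)=⟨f,ψ⟩ with Ψ(χ_G) ≠ 0. Then for every f ∈ ℓ²(G): ‖f − (Ψ(f)/Ψ(χ_G)) χ_G‖² ≤ (θ/λ₁) ‖∇f‖², where θ = |G|‖ψ‖²/|Ψ(χ_G)|². -/
open Finset

noncomputable def lap {V : Type*} [Fintype V] (w : V → V → ℝ) (f : V → ℂ) : V → ℂ :=
  fun v => ∑ u, (f v - f u) * (w v u : ℂ)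

noncomputable def gip {V : Type*} [Fintype V] (f g : V → ℂ) : ℂ :=
  ∑ v, f v * (starRingEnd ℂ) (g v)

noncomputable def gradSq {V : Type*} [Fintype V] (w : V → V → ℝ) (f : V → ℂ) : ℝ :=
  (1 / 2) * ∑ u, ∑ v, ‖f u - f v‖ ^ 2 * w u v

noncomputable def normSq {V : Type*} [Fintype V] (f : V → ℂ) : ℝ := ∑ v, ‖f v‖ ^ 2

/-- `μ` is an eigenvalue of the weighted graph Laplacian. -/
def IsEigen {V : Type*} [Fintype V] (w : V → V → ℝ) (μ : ℝ) : Prop :=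
  ∃ g : V → ℂ, g ≠ 0 ∧ lap w g = fun v => (μ : ℂ) * g v


section AuxPoincare

variable {V : Type*} [Fintype V]

lemma weight_swap (w : V → V → ℝ) (hsym : ∀ u v, w u v = w v u) (F : V → V → ℂ) :
    ∑ u, ∑ v, F u v * (w u v : ℂ) = ∑ u, ∑ v, F v u * (w u v : ℂ) := by
  rw [Finset.sum_comm]
  exact Finset.sum_congr rfl fun u _ => Finset.sum_congr rfl fun v _ => by rw [hsym]

lemma gip_lap (w : V → V → ℝ) (hsym : ∀ u v, w u v = w v u) (g : V → ℂ) :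
    gip (lap w g) g = (gradSq w g : ℂ) := by
  have h1 : gip (lap w g) g = ∑ u, ∑ v, (g u - g v) * (starRingEnd ℂ) (g u) * (w u v : ℂ) := by
    unfold gip lap
    rw [Finset.sum_congr rfl fun v _ => Finset.sum_mul _ _ _]
    exact Finset.sum_congr rfl fun u _ => Finset.sum_congr rfl fun v _ => by ring
  have h2 : (gradSq w g : ℂ) = (1/2 : ℂ) * ∑ u, ∑ v,
      ((g u - g v) * (starRingEnd ℂ) (g u - g v)) * (w u v : ℂ) := by
    unfold gradSq
    push_cast
    congr 1
    exact Finset.sum_congr rfl fun u _ => Finset.sum_congr rfl fun v _ => by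
      rw [Complex.mul_conj']
  have h3 : ∑ u, ∑ v, ((g u - g v) * (starRingEnd ℂ) (g u - g v)) * (w u v : ℂ)
      = (∑ u, ∑ v, (g u - g v) * (starRingEnd ℂ) (g u) * (w u v : ℂ))
        + ∑ u, ∑ v, ((g v - g u) * (starRingEnd ℂ) (g v)) * (w u v : ℂ) := by
    rw [← Finset.sum_add_distrib]
    refine Finset.sum_congr rfl fun u _ => ?_
    rw [← Finset.sum_add_distrib]
    refine Finset.sum_congr rfl fun v _ => ?_
    simp only [map_sub]
    ring
  rw [h1, h2, h3, weight_swap w hsym (fun u v => (g v - g u) * (starRingEnd ℂ) (g v))]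
  ring

lemma gradSq_nonneg (w : V → V → ℝ) (hnn : ∀ u v, 0 ≤ w u v) (g : V → ℂ) :
    0 ≤ gradSq w g := by
  unfold gradSq
  have : ∀ u : V, 0 ≤ ∑ v, ‖g u - g v‖ ^ 2 * w u v := fun u =>
    Finset.sum_nonneg fun v _ => mul_nonneg (by positivity) (hnn u v)
  have := Finset.sum_nonneg (fun u (_ : u ∈ Finset.univ) => this u)
  linarith

lemma gradSq_sub_const (w : V → V → ℝ) (f : V → ℂ) (c : ℂ) :
    gradSq w (fun v => f v - c) = gradSq w f := by
  unfold gradSq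
  simp [sub_sub_sub_cancel_right]

lemma eigen_nonneg (w : V → V → ℝ) (hsym : ∀ u v, w u v = w v u)
    (hnn : ∀ u v, 0 ≤ w u v) {μ : ℝ} (h : IsEigen w μ) : 0 ≤ μ := by
  obtain ⟨g, hg0, hg⟩ := h
  have h1 : gip (lap w g) g = (μ : ℂ) * (normSq g : ℂ) := by
    rw [hg]
    unfold gip normSq
    push_cast
    rw [Finset.mul_sum]
    exact Finset.sum_congr rfl fun v _ => by rw [mul_assoc, Complex.mul_conj']
  rw [gip_lap w hsym] at h1
  have hns : 0 < normSq g := by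
    unfold normSq
    have : ∃ v, g v ≠ 0 := by
      by_contra h
      push_neg at h
      exact hg0 (funext fun v => h v)
    obtain ⟨v, hv⟩ := this
    refine Finset.sum_pos' (fun i _ => by positivity) ⟨v, Finset.mem_univ v, by simpa using pow_pos (norm_pos_iff.mpr hv) 2⟩
  have : (μ : ℝ) * normSq g = gradSq w g := by
    exact_mod_cast h1.symm
  nlinarith [gradSq_nonneg w hnn g]

lemma lap_ker_const (w : V → V → ℝ) (hsym : ∀ u v, w u v = w v u)
    (hnn : ∀ u v, 0 ≤ w u v)
    (hconn : (SimpleGraph.fromRel fun u v : V => w u v ≠ 0).Connected)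
    {g : V → ℂ} (hg : lap w g = 0) : ∀ u v, g u = g v := by
  have hgrad : gradSq w g = 0 := by
    have := gip_lap w hsym g
    rw [hg] at this
    have : (gradSq w g : ℂ) = 0 := by
      rw [← this]; unfold gip; simp
    exact_mod_cast this
  have hterm : ∀ u v, ‖g u - g v‖ ^ 2 * w u v = 0 := by
    have hsum : ∑ u, ∑ v, ‖g u - g v‖ ^ 2 * w u v = 0 := by
      unfold gradSq at hgrad; linarith
    have h1 := (Finset.sum_eq_zero_iff_of_nonneg (fun u _ =>
      Finset.sum_nonneg fun v _ => mul_nonneg (by positivity) (hnn u v))).mp hsum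
    intro u v
    have h2 := (Finset.sum_eq_zero_iff_of_nonneg (fun v _ =>
      mul_nonneg (by positivity) (hnn u v))).mp (h1 u (Finset.mem_univ u))
    exact h2 v (Finset.mem_univ v)
  have hadj : ∀ u v, (SimpleGraph.fromRel fun u v : V => w u v ≠ 0).Adj u v → g u = g v := by
    intro u v hadj
    obtain ⟨-, h⟩ := hadj
    have hw : w u v ≠ 0 := by
      rcases h with h | h
      · exact h
      · rw [hsym]; exact h
    have := hterm u v
    have : ‖g u - g v‖ ^ 2 = 0 := by
      rcases mul_eq_zero.mp this with h' | h'
      · exact h'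
      · exact absurd h' hw
    have : g u - g v = 0 := by
      rwa [pow_eq_zero_iff (by norm_num), norm_eq_zero] at this
    exact sub_eq_zero.mp this
  intro u v
  obtain ⟨p⟩ := hconn.preconnected u v
  induction p with
  | nil => rfl
  | cons hadj' p ih => exact (hadj _ _ hadj').trans ih

noncomputable def lapLM (w : V → V → ℝ) : EuclideanSpace ℂ V →ₗ[ℂ] EuclideanSpace ℂ V where
  toFun f := (WithLp.equiv 2 (V → ℂ)).symm (lap w ((WithLp.equiv 2 (V → ℂ)) f))
  map_add' f g := by
    ext v
    simp only [WithLp.equiv_symm_apply, WithLp.equiv_apply, PiLp.toLp_apply, lap, PiLp.add_apply]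
    rw [← Finset.sum_add_distrib]
    exact Finset.sum_congr rfl fun u _ => by ring
  map_smul' c f := by
    ext v
    simp only [WithLp.equiv_symm_apply, WithLp.equiv_apply, PiLp.toLp_apply, lap, PiLp.smul_apply,
      smul_eq_mul, RingHom.id_apply]
    rw [Finset.mul_sum]
    exact Finset.sum_congr rfl fun u _ => by ring

lemma lapLM_apply (w : V → V → ℝ) (f : EuclideanSpace ℂ V) (v : V) :
    lapLM w f v = lap w (fun u => f u) v := rfl

lemma lapLM_symm (w : V → V → ℝ) (hsym : ∀ u v, w u v = w v u) :
    (lapLM w).IsSymmetric := by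
  intro x y
  simp only [PiLp.inner_apply, RCLike.inner_apply]
  rw [Finset.sum_congr rfl fun v _ => mul_comm (y v) _,
    Finset.sum_congr rfl fun v _ => mul_comm (lapLM w y v) _]
  have hx : ∀ v, (starRingEnd ℂ) (lapLM w x v) =
      ∑ u, ((starRingEnd ℂ) (x v) - (starRingEnd ℂ) (x u)) * (w v u : ℂ) := by
    intro v
    rw [lapLM_apply]
    unfold lap
    rw [map_sum]
    exact Finset.sum_congr rfl fun u _ => by
      rw [map_mul, map_sub, Complex.conj_ofReal]
  have hl : ∑ v, (starRingEnd ℂ) (lapLM w x v) * y v =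
      ∑ v, ∑ u, (((starRingEnd ℂ) (x v) - (starRingEnd ℂ) (x u)) * y v) * (w v u : ℂ) := by
    refine Finset.sum_congr rfl fun v _ => ?_
    rw [hx, Finset.sum_mul]
    exact Finset.sum_congr rfl fun u _ => by ring
  have hr : ∑ v, (starRingEnd ℂ) (x v) * (lapLM w y v) =
      ∑ v, ∑ u, ((starRingEnd ℂ) (x v) * (y v - y u)) * (w v u : ℂ) := by
    refine Finset.sum_congr rfl fun v _ => ?_
    rw [lapLM_apply]
    unfold lap
    rw [Finset.mul_sum]
    exact Finset.sum_congr rfl fun u _ => by ring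
  rw [hl, hr]
  apply sub_eq_zero.mp
  have key : ∑ v, ∑ u, ((starRingEnd ℂ) (x u) * y v) * (w v u : ℂ)
      = ∑ v, ∑ u, ((starRingEnd ℂ) (x v) * y u) * (w v u : ℂ) :=
    weight_swap w hsym _
  calc (∑ v, ∑ u, (((starRingEnd ℂ) (x v) - (starRingEnd ℂ) (x u)) * y v) * (w v u : ℂ))
        - ∑ v, ∑ u, ((starRingEnd ℂ) (x v) * (y v - y u)) * (w v u : ℂ)
      = (∑ v, ∑ u, ((starRingEnd ℂ) (x v) * y u) * (w v u : ℂ))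
        - ∑ v, ∑ u, ((starRingEnd ℂ) (x u) * y v) * (w v u : ℂ) := by
        rw [← Finset.sum_sub_distrib, ← Finset.sum_sub_distrib]
        refine Finset.sum_congr rfl fun v _ => ?_
        rw [← Finset.sum_sub_distrib, ← Finset.sum_sub_distrib]
        exact Finset.sum_congr rfl fun u _ => by ring
    _ = 0 := by rw [key]; ring

lemma normSq_eq_norm_sq (h : V → ℂ) :
    normSq h = ‖(WithLp.equiv 2 (V → ℂ)).symm h‖ ^ 2 := by
  rw [EuclideanSpace.norm_eq, Real.sq_sqrt (Finset.sum_nonneg fun v _ => by positivity)]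
  rfl

lemma euclid_normSq (x : EuclideanSpace ℂ V) : ‖x‖ ^ 2 = ∑ v, ‖x v‖ ^ 2 := by
  rw [EuclideanSpace.norm_eq, Real.sq_sqrt (Finset.sum_nonneg fun v _ => by positivity)]

lemma poincare (w : V → V → ℝ) (hsym : ∀ u v, w u v = w v u) (hnn : ∀ u v, 0 ≤ w u v)
    (hconn : (SimpleGraph.fromRel fun u v : V => w u v ≠ 0).Connected)
    (lam1 : ℝ) (hlam : IsLeast {μ : ℝ | μ ≠ 0 ∧ IsEigen w μ} lam1)
    (h : V → ℂ) (hmean : ∑ v, h v = 0) :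
    lam1 * normSq h ≤ gradSq w h := by
  classical
  set T := lapLM w with hT_def
  have hT : T.IsSymmetric := lapLM_symm w hsym
  have hn : Module.finrank ℂ (EuclideanSpace ℂ V) = Fintype.card V := by
    simp [finrank_euclideanSpace]
  set b := hT.eigenvectorBasis hn with hb_def
  set μ := hT.eigenvalues hn with hμ_def
  set x : EuclideanSpace ℂ V := (WithLp.equiv 2 (V → ℂ)).symm h with hx_def
  have hxv : ∀ v, x v = h v := fun v => rfl
  set c : Fin (Fintype.card V) → ℂ := fun i => b.repr x i with hc_def
  -- norm identity
  have hnorm : normSq h = ∑ i, ‖c i‖ ^ 2 := by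
    rw [normSq_eq_norm_sq, ← hx_def, ← b.repr.norm_map x, euclid_normSq]
  -- energy identity
  have hTx : ∀ v, T x v = lap w h v := fun v => lapLM_apply w x v
  have h1 : (inner ℂ (T x) x : ℂ) = (starRingEnd ℂ) (gip (lap w h) h) := by
    simp only [PiLp.inner_apply, RCLike.inner_apply]
    unfold gip
    rw [map_sum]
    refine Finset.sum_congr rfl fun v _ => ?_
    rw [map_mul, Complex.conj_conj, hTx v, mul_comm]
    rfl
  have hinner : (inner ℂ x (T x) : ℂ) = (gradSq w h : ℂ) := by
    rw [← inner_conj_symm, h1, gip_lap w hsym, Complex.conj_conj]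
  have hexp : (gradSq w h : ℂ) = ∑ i, ((μ i * ‖c i‖ ^ 2 : ℝ) : ℂ) := by
    rw [← hinner, ← b.repr.inner_map_map x (T x)]
    simp only [PiLp.inner_apply, RCLike.inner_apply]
    refine Finset.sum_congr rfl fun i _ => ?_
    rw [hT.eigenvectorBasis_apply_self_apply hn x i]
    show ((μ i : ℂ) * c i) * (starRingEnd ℂ) (c i) = ((μ i * ‖c i‖ ^ 2 : ℝ) : ℂ)
    push_cast
    rw [← Complex.mul_conj' (c i)]
    ring
  have hre : gradSq w h = ∑ i, μ i * ‖c i‖ ^ 2 := by exact_mod_cast hexp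
  have hkey : ∀ i, lam1 * ‖c i‖ ^ 2 ≤ μ i * ‖c i‖ ^ 2 := by
    intro i
    rcases eq_or_ne (c i) 0 with hci | hci
    · simp [hci]
    rcases eq_or_ne (μ i) 0 with hμi | hμi
    · exfalso
      have hTb : T (b i) = 0 := by
        rw [hb_def, hT.apply_eigenvectorBasis hn i, ← hμ_def, hμi]
        simp
      have hlapb : lap w (fun u => b i u) = 0 := by
        funext v
        rw [← lapLM_apply w (b i) v]
        show T (b i) v = 0
        rw [hTb]
        rfl
      have hconst := lap_ker_const w hsym hnn hconn hlapb
      have hV : Nonempty V := Fintype.card_pos_iff.mp i.pos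
      obtain ⟨v0⟩ := hV
      have hci' : c i = ∑ v, (starRingEnd ℂ) (b i v) * h v := by
        show b.repr x i = _
        rw [b.repr_apply_apply]
        simp only [PiLp.inner_apply, RCLike.inner_apply]
        exact Finset.sum_congr rfl fun v _ => mul_comm _ _
      have : c i = (starRingEnd ℂ) (b i v0) * ∑ v, h v := by
        rw [hci', Finset.mul_sum]
        exact Finset.sum_congr rfl fun v _ => by rw [hconst v v0]
      rw [hmean, mul_zero] at this
      exact hci this
    · have hbne : (fun u => b i u) ≠ 0 := by
        intro h0
        have : b i = 0 := by
          ext u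
          exact congrFun h0 u
        have h1 : ‖b i‖ = 1 := b.orthonormal.1 i
        rw [this, norm_zero] at h1
        norm_num at h1
      have heig : IsEigen w (μ i) := by
        refine ⟨fun u => b i u, hbne, ?_⟩
        funext v
        rw [← lapLM_apply w (b i) v]
        show T (b i) v = _
        rw [hb_def, hT.apply_eigenvectorBasis hn i, ← hμ_def]
        rfl
      have hle : lam1 ≤ μ i := hlam.2 ⟨hμi, heig⟩
      exact mul_le_mul_of_nonneg_right hle (by positivity)
  calc lam1 * normSq h = ∑ i, lam1 * ‖c i‖ ^ 2 := by rw [hnorm, Finset.mul_sum]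
    _ ≤ ∑ i, μ i * ‖c i‖ ^ 2 := Finset.sum_le_sum fun i _ => hkey i
    _ = gradSq w h := hre.symm

lemma gip_cs (h ψ : V → ℂ) : ‖gip h ψ‖ ^ 2 ≤ normSq h * normSq ψ := by
  set h' : EuclideanSpace ℂ V := (WithLp.equiv 2 (V → ℂ)).symm h with hh'
  set ψ' : EuclideanSpace ℂ V := (WithLp.equiv 2 (V → ℂ)).symm ψ with hψ'
  have hip : (inner ℂ h' ψ' : ℂ) = (starRingEnd ℂ) (gip h ψ) := by
    simp only [PiLp.inner_apply, RCLike.inner_apply]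
    unfold gip
    rw [map_sum]
    refine Finset.sum_congr rfl fun v _ => ?_
    rw [map_mul, Complex.conj_conj, mul_comm]
    rfl
  have h1 : ‖gip h ψ‖ = ‖(inner ℂ h' ψ' : ℂ)‖ := by
    rw [hip, RCLike.norm_conj]
  rw [h1, normSq_eq_norm_sq, normSq_eq_norm_sq]
  calc ‖(inner ℂ h' ψ' : ℂ)‖ ^ 2 ≤ (‖h'‖ * ‖ψ'‖) ^ 2 := by
        have := norm_inner_le_norm (𝕜 := ℂ) h' ψ'
        nlinarith [norm_nonneg (inner ℂ h' ψ' : ℂ), norm_nonneg h', norm_nonneg ψ']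
    _ = ‖h'‖ ^ 2 * ‖ψ'‖ ^ 2 := by ring

lemma normSq_add_const (h : V → ℂ) (m : ℂ) (hsum : ∑ v, h v = 0) :
    normSq (fun v => h v + m) = normSq h + (Fintype.card V : ℝ) * ‖m‖ ^ 2 := by
  have key : ((normSq (fun v => h v + m) : ℝ) : ℂ)
      = ((normSq h + (Fintype.card V : ℝ) * ‖m‖ ^ 2 : ℝ) : ℂ) := by
    have e1 : ∀ F : V → ℂ, ((normSq F : ℝ) : ℂ) = ∑ v, F v * (starRingEnd ℂ) (F v) := by
      intro F
      unfold normSq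
      push_cast
      exact Finset.sum_congr rfl fun v _ => (Complex.mul_conj' (F v)).symm
    rw [e1]
    push_cast
    rw [← Complex.mul_conj' m]
    have expand : ∀ v : V, (h v + m) * (starRingEnd ℂ) (h v + m)
        = h v * (starRingEnd ℂ) (h v) + (starRingEnd ℂ) m * h v
          + m * (starRingEnd ℂ) (h v) + m * (starRingEnd ℂ) m := fun v => by
      rw [map_add]; ring
    rw [Finset.sum_congr rfl fun v _ => expand v, Finset.sum_add_distrib, Finset.sum_add_distrib,
      Finset.sum_add_distrib, ← Finset.mul_sum, ← Finset.mul_sum, ← map_sum, hsum,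
      Finset.sum_const, Finset.card_univ, ← e1 h]
    simp [nsmul_eq_mul]
  exact_mod_cast key

end AuxPoincare

theorem poincare_weighted_mean
    {V : Type*} [Fintype V] (w : V → V → ℝ)
    (hsym : ∀ u v, w u v = w v u) (hnn : ∀ u v, 0 ≤ w u v)
    (hdiag : ∀ v, w v v = 0)
    (hconn : (SimpleGraph.fromRel fun u v : V => w u v ≠ 0).Connected)
    (hcard : 1 < Fintype.card V)
    (lam1 : ℝ) (hlam : IsLeast {μ : ℝ | μ ≠ 0 ∧ IsEigen w μ} lam1)
    (ψ : V → ℂ) (hψ : gip (fun _ => 1) ψ ≠ 0)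
    (f : V → ℂ) :
    normSq (fun v => f v - gip f ψ / gip (fun _ => 1) ψ) ≤
      ((Fintype.card V : ℝ) * normSq ψ / ‖gip (fun _ => (1 : ℂ)) ψ‖ ^ 2) / lam1
        * gradSq w f := by
  classical
  set S : ℂ := gip (fun _ => 1) ψ with hS_def
  set nR : ℝ := (Fintype.card V : ℝ) with hnR
  set nC : ℂ := (Fintype.card V : ℂ) with hnC
  have hnR0 : 0 < nR := by rw [hnR]; exact_mod_cast Nat.lt_of_lt_of_le Nat.zero_lt_one hcard.le
  have hnC0 : nC ≠ 0 := by
    rw [hnC]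
    simp only [ne_eq, Nat.cast_eq_zero]
    omega
  -- constants
  set c : ℂ := gip f ψ / S with hc_def
  set g : V → ℂ := fun v => f v - c with hg_def
  set P : ℂ := ∑ v, ψ v with hP
  set a : ℂ := P / nC with ha_def
  have hS_conj : S = (starRingEnd ℂ) P := by
    rw [hS_def, hP]
    unfold gip
    rw [map_sum]
    exact Finset.sum_congr rfl fun v _ => by rw [one_mul]
  have hnormS : ‖S‖ = ‖P‖ := by rw [hS_conj]; exact RCLike.norm_conj _
  have hnorma : ‖P‖ = nR * ‖a‖ := by
    rw [ha_def, norm_div]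
    have : ‖nC‖ = nR := by rw [hnC, hnR]; simp
    rw [this]
    field_simp
  -- mean-zero decomposition of ψ
  have ha_mean : ∑ v, (ψ v - a) = 0 := by
    rw [Finset.sum_sub_distrib, Finset.sum_const, Finset.card_univ, ← hP, ha_def]
    rw [nsmul_eq_mul, ← hnC]
    field_simp
    ring
  have hψdec : normSq ψ = normSq (fun v => ψ v - a) + nR * ‖a‖ ^ 2 := by
    have h1 := normSq_add_const (fun v => ψ v - a) a ha_mean
    have h2 : (fun v => (ψ v - a) + a) = ψ := funext fun v => by ring
    rw [h2] at h1
    rw [h1, hnR]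
  -- g and its mean
  set m : ℂ := (∑ v, g v) / nC with hm_def
  set h : V → ℂ := fun v => g v - m with hh_def
  have hsum_h : ∑ v, h v = 0 := by
    rw [hh_def]
    simp only []
    rw [Finset.sum_sub_distrib, Finset.sum_const, Finset.card_univ, hm_def, nsmul_eq_mul, ← hnC]
    field_simp
    ring
  have hgh : normSq g = normSq h + nR * ‖m‖ ^ 2 := by
    have h1 := normSq_add_const h m hsum_h
    have h2 : (fun v => h v + m) = g := funext fun v => by rw [hh_def]; ring
    rw [h2] at h1
    rw [h1, hnR]
  have hgradh : gradSq w h = gradSq w f := by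
    have h2 : h = fun v => f v - (c + m) := funext fun v => by rw [hh_def, hg_def]; ring
    rw [h2, gradSq_sub_const]
  -- orthogonality
  have hgψ : gip g ψ = 0 := by
    have e1 : gip g ψ = gip f ψ - c * S := by
      rw [hg_def, hS_conj, hP]
      unfold gip
      rw [map_sum, Finset.mul_sum, ← Finset.sum_sub_distrib]
      exact Finset.sum_congr rfl fun v _ => by ring
    rw [e1, hc_def]
    field_simp
    ring
  have hmS : m * S = - gip h ψ := by
    have e1 : gip g ψ = gip h ψ + m * S := by
      rw [hh_def, hS_conj, hP]
      unfold gip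
      rw [map_sum, Finset.mul_sum, ← Finset.sum_add_distrib]
      exact Finset.sum_congr rfl fun v _ => by ring
    rw [e1] at hgψ
    linear_combination hgψ
  have hhψa : gip h ψ = gip h (fun v => ψ v - a) := by
    have e : gip h (fun v => ψ v - a) = gip h ψ - (∑ v, h v) * (starRingEnd ℂ) a := by
      unfold gip
      rw [Finset.sum_mul, ← Finset.sum_sub_distrib]
      exact Finset.sum_congr rfl fun v _ => by rw [map_sub]; ring
    rw [e, hsum_h, zero_mul, sub_zero]
  have hcs : ‖gip h ψ‖ ^ 2 ≤ normSq h * (normSq ψ - nR * ‖a‖ ^ 2) := by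
    rw [hhψa]
    have h1 := gip_cs h (fun v => ψ v - a)
    have e : normSq (fun v => ψ v - a) = normSq ψ - nR * ‖a‖ ^ 2 := by linarith [hψdec]
    rwa [e] at h1
  have hMK : ‖m‖ ^ 2 * ‖S‖ ^ 2 ≤ normSq h * (normSq ψ - nR * ‖a‖ ^ 2) := by
    have e : ‖m‖ * ‖S‖ = ‖gip h ψ‖ := by rw [← norm_mul, hmS, norm_neg]
    nlinarith [hcs, norm_nonneg (gip h ψ), norm_nonneg m, norm_nonneg S]
  have hKa : ‖S‖ ^ 2 = nR ^ 2 * ‖a‖ ^ 2 := by rw [hnormS, hnorma]; ring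
  have hK0 : (0:ℝ) < ‖S‖ ^ 2 := pow_pos (norm_pos_iff.mpr hψ) 2
  have hlam1pos : 0 < lam1 :=
    lt_of_le_of_ne (eigen_nonneg w hsym hnn hlam.1.2) (Ne.symm hlam.1.1)
  have hpoin : lam1 * normSq h ≤ gradSq w f := by
    rw [← hgradh]
    exact poincare w hsym hnn hconn lam1 hlam h hsum_h
  have hnsq : ∀ F : V → ℂ, 0 ≤ normSq F := fun F => Finset.sum_nonneg fun v _ => sq_nonneg _
  have hA0 : 0 ≤ normSq h := hnsq h
  have hB0 : 0 ≤ normSq ψ := hnsq ψ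
  have hG0 : 0 ≤ gradSq w f := gradSq_nonneg w hnn f
  have step1 : normSq g * ‖S‖ ^ 2 ≤ nR * normSq ψ * normSq h := by
    rw [hgh, hKa]
    rw [hKa] at hMK
    nlinarith [mul_le_mul_of_nonneg_left hMK hnR0.le, hA0, sq_nonneg ‖a‖, norm_nonneg m]
  have step2 : normSq h ≤ gradSq w f / lam1 := by
    rw [le_div_iff₀ hlam1pos, mul_comm]
    exact hpoin
  calc normSq g ≤ nR * normSq ψ * normSq h / ‖S‖ ^ 2 := by
        rw [le_div_iff₀ hK0]
        exact step1
    _ = (nR * normSq ψ / ‖S‖ ^ 2) * normSq h := by ring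
    _ ≤ (nR * normSq ψ / ‖S‖ ^ 2) * (gradSq w f / lam1) := by
        apply mul_le_mul_of_nonneg_left step2
        positivity
    _ = (nR * normSq ψ / ‖S‖ ^ 2) / lam1 * gradSq w f := by ring
end

section
/- Under the cover assumptions with Ψ_j the Dirac functional at a vertex v_j ∈ S_j, if f(v_j) = 0 for all j ∈ J then ‖f‖² ≤ (sup_j |S_j| / Λ) ⟨f, Lf⟩, where Λ = inf_j λ_{1,j}. -/
open Finset

/-- The squared weighted gradient norm of the subgraph induced on `S`
(only edges with both ends in `S`). -/
noncomputable def gradSqOn {V : Type*} (w : V → V → ℝ) (S : Finset V) (f : V → ℂ) : ℝ :=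
  (1 / 2) * ∑ u ∈ S, ∑ v ∈ S, ‖f u - f v‖ ^ 2 * w u v

/-- `μ` is an eigenvalue of the Laplacian of the subgraph induced on `S`. -/
def IsEigenOn {V : Type*} (w : V → V → ℝ) (S : Finset V) (μ : ℝ) : Prop :=
  ∃ g : V → ℂ, g ≠ 0 ∧ (∀ v, v ∉ S → g v = 0) ∧
    ∀ v ∈ S, ∑ u ∈ S, (g v - g u) * (w v u : ℂ) = (μ : ℂ) * g v

/-- The functional `Ψ(f) = ⟨f, ψ⟩` computed over `S`. -/
noncomputable def PsiOn {V : Type*} (S : Finset V) (ψ f : V → ℂ) : ℂ :=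
  ∑ v ∈ S, f v * (starRingEnd ℂ) (ψ v)

/-- The induced subgraph on `S` (edges of nonzero weight inside `S`) is connected. -/
def IndConnected {V : Type*} (w : V → V → ℝ) (S : Finset V) : Prop :=
  (SimpleGraph.fromRel fun u v : {x : V // x ∈ S} => w u.1 v.1 ≠ 0).Connected



noncomputable def lapF {ι : Type*} [Fintype ι] (ω : ι → ι → ℝ) (g : ι → ℂ) : ι → ℂ :=
  fun v => ∑ u, (g v - g u) * (ω v u : ℂ)

noncomputable def lapT {ι : Type*} [Fintype ι] (ω : ι → ι → ℝ) :
    EuclideanSpace ℂ ι →ₗ[ℂ] EuclideanSpace ℂ ι where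
  toFun g := WithLp.toLp 2 (lapF ω g)
  map_add' x y := by
    ext v
    show ∑ u, ((x v + y v) - (x u + y u)) * (ω v u : ℂ)
        = (∑ u, (x v - x u) * (ω v u : ℂ)) + ∑ u, (y v - y u) * (ω v u : ℂ)
    rw [← Finset.sum_add_distrib]
    exact Finset.sum_congr rfl fun u _ => by ring
  map_smul' c x := by
    ext v
    show ∑ u, (c * x v - c * x u) * (ω v u : ℂ) = c * ∑ u, (x v - x u) * (ω v u : ℂ)
    rw [Finset.mul_sum]
    exact Finset.sum_congr rfl fun u _ => by ring

lemma lapT_apply {ι : Type*} [Fintype ι] (ω : ι → ι → ℝ) (g : EuclideanSpace ℂ ι) (v : ι) :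
    lapT ω g v = ∑ u, (g v - g u) * (ω v u : ℂ) := rfl

lemma re_mul_ofReal (z : ℂ) (r : ℝ) : (z * (r : ℂ)).re = z.re * r := by
  simp [Complex.mul_re]

/-- Green's identity: the quadratic form of the Laplacian equals the gradient sum. -/
lemma green {ι : Type*} [Fintype ι] (ω : ι → ι → ℝ) (hsym : ∀ u v, ω u v = ω v u)
    (g : ι → ℂ) :
    ∑ v, ∑ u, ((g v - g u) * (starRingEnd ℂ) (g v)).re * ω v u
      = (1 / 2) * ∑ u, ∑ v, ‖g u - g v‖ ^ 2 * ω u v := by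
  have key : ∀ a b : ℂ, ((a - b) * (starRingEnd ℂ) a).re + ((b - a) * (starRingEnd ℂ) b).re
      = ‖a - b‖ ^ 2 := by
    intro a b
    have h1 : ((a - b) * (starRingEnd ℂ) (a - b)).re = ‖a - b‖ ^ 2 := by
      rw [Complex.mul_conj, Complex.ofReal_re, Complex.sq_norm]
    rw [← h1, ← Complex.add_re]
    congr 1
    rw [map_sub]
    ring
  have hswap : ∑ v, ∑ u, ((g u - g v) * (starRingEnd ℂ) (g u)).re * ω v u
      = ∑ v, ∑ u, ((g v - g u) * (starRingEnd ℂ) (g v)).re * ω v u := by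
    rw [Finset.sum_comm]
    exact Finset.sum_congr rfl fun v _ => Finset.sum_congr rfl fun u _ => by rw [hsym u v]
  have h2 : 2 * ∑ v, ∑ u, ((g v - g u) * (starRingEnd ℂ) (g v)).re * ω v u
      = ∑ v, ∑ u, ‖g v - g u‖ ^ 2 * ω v u := by
    calc 2 * ∑ v, ∑ u, ((g v - g u) * (starRingEnd ℂ) (g v)).re * ω v u
        = (∑ v, ∑ u, ((g v - g u) * (starRingEnd ℂ) (g v)).re * ω v u)
          + ∑ v, ∑ u, ((g u - g v) * (starRingEnd ℂ) (g u)).re * ω v u := by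
          rw [hswap]; ring
      _ = ∑ v, ∑ u, ‖g v - g u‖ ^ 2 * ω v u := by
          rw [← Finset.sum_add_distrib]
          refine Finset.sum_congr rfl fun v _ => ?_
          rw [← Finset.sum_add_distrib]
          refine Finset.sum_congr rfl fun u _ => ?_
          rw [← add_mul, key]
  have : ∑ u, ∑ v, ‖g u - g v‖ ^ 2 * ω u v = ∑ v, ∑ u, ‖g v - g u‖ ^ 2 * ω v u := rfl
  rw [this, ← h2]; ring

lemma lapT_isSymmetric {ι : Type*} [Fintype ι] (ω : ι → ι → ℝ)
    (hsym : ∀ u v, ω u v = ω v u) : (lapT ω).IsSymmetric := by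
  intro x y
  have key : ∑ v, ∑ u, (starRingEnd ℂ) (x u) * y v * (ω v u : ℂ)
      = ∑ v, ∑ u, (starRingEnd ℂ) (x v) * y u * (ω v u : ℂ) := by
    rw [Finset.sum_comm]
    exact Finset.sum_congr rfl fun v _ => Finset.sum_congr rfl fun u _ => by rw [hsym u v]
  have e1 : (inner ℂ (lapT ω x) y : ℂ)
      = (∑ v, ∑ u, (starRingEnd ℂ) (x v) * y v * (ω v u : ℂ))
        - ∑ v, ∑ u, (starRingEnd ℂ) (x u) * y v * (ω v u : ℂ) := by
    rw [PiLp.inner_apply, ← Finset.sum_sub_distrib]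
    refine Finset.sum_congr rfl fun v _ => ?_
    rw [RCLike.inner_apply', lapT_apply, map_sum, Finset.sum_mul, ← Finset.sum_sub_distrib]
    refine Finset.sum_congr rfl fun u _ => ?_
    rw [map_mul, map_sub, Complex.conj_ofReal]
    ring
  have e2 : (inner ℂ x (lapT ω y) : ℂ)
      = (∑ v, ∑ u, (starRingEnd ℂ) (x v) * y v * (ω v u : ℂ))
        - ∑ v, ∑ u, (starRingEnd ℂ) (x v) * y u * (ω v u : ℂ) := by
    rw [PiLp.inner_apply, ← Finset.sum_sub_distrib]
    refine Finset.sum_congr rfl fun v _ => ?_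
    rw [RCLike.inner_apply', lapT_apply, Finset.mul_sum, ← Finset.sum_sub_distrib]
    refine Finset.sum_congr rfl fun u _ => ?_
    ring
  rw [e1, e2, key]

lemma inner_lapT_re {ι : Type*} [Fintype ι] (ω : ι → ι → ℝ) (hsym : ∀ u v, ω u v = ω v u)
    (g : EuclideanSpace ℂ ι) :
    (inner ℂ g (lapT ω g) : ℂ).re = (1 / 2) * ∑ u, ∑ v, ‖g u - g v‖ ^ 2 * ω u v := by
  rw [← green ω hsym g]
  rw [PiLp.inner_apply, Complex.re_sum]
  refine Finset.sum_congr rfl fun v _ => ?_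
  rw [RCLike.inner_apply', lapT_apply, Finset.mul_sum, Complex.re_sum]
  refine Finset.sum_congr rfl fun u _ => ?_
  rw [← re_mul_ofReal]
  congr 1
  ring

lemma const_of_lapT_eq_zero {ι : Type*} [Fintype ι] (ω : ι → ι → ℝ)
    (hsym : ∀ u v, ω u v = ω v u) (hnn : ∀ u v, 0 ≤ ω u v)
    (hconn : (SimpleGraph.fromRel fun u v : ι => ω u v ≠ 0).Connected)
    (e : EuclideanSpace ℂ ι) (he : lapT ω e = 0) : ∀ u v, e u = e v := by
  have h0 : (1 / 2) * ∑ u, ∑ v, ‖e u - e v‖ ^ 2 * ω u v = 0 := by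
    rw [← inner_lapT_re ω hsym e, he]
    simp
  have hterm : ∀ u v : ι, ω u v ≠ 0 → e u = e v := by
    have hz : ∑ u, ∑ v, ‖e u - e v‖ ^ 2 * ω u v = 0 := by linarith
    have h1 := (Finset.sum_eq_zero_iff_of_nonneg (fun u _ =>
      Finset.sum_nonneg fun v _ => mul_nonneg (by positivity) (hnn u v))).mp hz
    intro u v hw
    have h2 := (Finset.sum_eq_zero_iff_of_nonneg (fun v _ =>
      mul_nonneg (by positivity) (hnn u v))).mp (h1 u (Finset.mem_univ u)) v (Finset.mem_univ v)
    have h3 : ‖e u - e v‖ ^ 2 = 0 := by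
      rcases mul_eq_zero.mp h2 with h | h
      · exact h
      · exact absurd h hw
    have h4 : e u - e v = 0 := by
      rw [← norm_eq_zero]; nlinarith [norm_nonneg (e u - e v)]
    exact sub_eq_zero.mp h4
  intro u v
  obtain ⟨p⟩ := hconn u v
  induction p with
  | nil => rfl
  | @cons a b c hadj q ih =>
    rcases (SimpleGraph.fromRel_adj _ a b).mp hadj with ⟨-, h' | h'⟩
    · exact (hterm a b h').trans ih
    · exact ((hterm b a h').symm).trans ih

lemma spectral_gap {ι : Type*} [Fintype ι] [Nonempty ι] (ω : ι → ι → ℝ)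
    (hsym : ∀ u v, ω u v = ω v u) (hnn : ∀ u v, 0 ≤ ω u v)
    (hconn : (SimpleGraph.fromRel fun u v : ι => ω u v ≠ 0).Connected)
    (lam0 : ℝ)
    (hlb : ∀ μ : ℝ, μ ≠ 0 →
      (∃ e : EuclideanSpace ℂ ι, e ≠ 0 ∧ lapT ω e = (μ : ℂ) • e) → lam0 ≤ μ)
    (g : EuclideanSpace ℂ ι) (hg : ∑ v, g v = 0) :
    lam0 * ∑ v, ‖g v‖ ^ 2 ≤ (inner ℂ g (lapT ω g) : ℂ).re := by
  classical
  have hT : (lapT ω).IsSymmetric := lapT_isSymmetric ω hsym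
  have hn : Module.finrank ℂ (EuclideanSpace ℂ ι) = Fintype.card ι := finrank_euclideanSpace
  set b := hT.eigenvectorBasis hn with hb
  set μ := hT.eigenvalues hn with hμ
  have heig : ∀ i, lapT ω (b i) = (μ i : ℂ) • b i := fun i => hT.apply_eigenvectorBasis hn i
  -- coefficients
  have hcoef : ∀ i, (inner ℂ g (b i) : ℂ) * inner ℂ (b i) g = (‖(inner ℂ (b i) g : ℂ)‖ ^ 2 : ℝ) := by
    intro i
    rw [← inner_conj_symm g (b i), RCLike.conj_mul]
    norm_cast
  -- Parseval for the norm
  have hnorm : ∑ v, ‖g v‖ ^ 2 = ∑ i, ‖(inner ℂ (b i) g : ℂ)‖ ^ 2 := by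
    have h1 : (∑ i, ((inner ℂ g (b i) : ℂ) * inner ℂ (b i) g)) = inner ℂ g g :=
      b.sum_inner_mul_inner g g
    have h2 : (inner ℂ g g : ℂ) = (‖g‖ : ℂ) ^ 2 := inner_self_eq_norm_sq_to_K g
    have h3 : ‖g‖ ^ 2 = ∑ v, ‖g v‖ ^ 2 := by
      rw [EuclideanSpace.norm_eq]
      rw [Real.sq_sqrt (Finset.sum_nonneg fun v _ => by positivity)]
    have h4 : (∑ i, ((inner ℂ g (b i) : ℂ) * inner ℂ (b i) g)).re
        = ∑ i, ‖(inner ℂ (b i) g : ℂ)‖ ^ 2 := by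
      rw [Complex.re_sum]
      refine Finset.sum_congr rfl fun i _ => ?_
      rw [hcoef i, Complex.ofReal_re]
    rw [← h4, h1, h2]
    push_cast
    rw [← h3]
    norm_cast
  -- quadratic form via eigenvalues
  have hquad : (inner ℂ g (lapT ω g) : ℂ).re = ∑ i, μ i * ‖(inner ℂ (b i) g : ℂ)‖ ^ 2 := by
    have h1 : (inner ℂ g (lapT ω g) : ℂ)
        = ∑ i, (inner ℂ g (b i) : ℂ) * inner ℂ (b i) (lapT ω g) :=
      (b.sum_inner_mul_inner g (lapT ω g)).symm
    have h2 : ∀ i, (inner ℂ (b i) (lapT ω g) : ℂ) = (μ i : ℂ) * inner ℂ (b i) g := by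
      intro i
      rw [← hT (b i) g, heig i, inner_smul_left, Complex.conj_ofReal]
    rw [h1]
    rw [Complex.re_sum]
    refine Finset.sum_congr rfl fun i _ => ?_
    rw [h2 i, show (inner ℂ g (b i) : ℂ) * ((μ i : ℂ) * inner ℂ (b i) g)
        = (μ i : ℂ) * (inner ℂ g (b i) * inner ℂ (b i) g) from by ring,
      hcoef i, ← Complex.ofReal_mul, Complex.ofReal_re]
  -- each nonzero-coefficient eigenvalue is at least lam0
  have hge : ∀ i, (inner ℂ (b i) g : ℂ) ≠ 0 → lam0 ≤ μ i := by
    intro i hi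
    by_cases hμ0 : μ i = 0
    · exfalso
      have hz : lapT ω (b i) = 0 := by rw [heig i, hμ0]; simp
      have hconst := const_of_lapT_eq_zero ω hsym hnn hconn (b i) hz
      obtain ⟨v0⟩ := ‹Nonempty ι›
      have : (inner ℂ (b i) g : ℂ) = (starRingEnd ℂ) (b i v0) * ∑ v, g v := by
        rw [PiLp.inner_apply, Finset.mul_sum]
        exact Finset.sum_congr rfl fun v _ => by
          rw [RCLike.inner_apply', hconst v v0]
      rw [this, hg, mul_zero] at hi
      exact hi rfl
    · exact hlb (μ i) hμ0 ⟨b i, b.orthonormal.ne_zero i, heig i⟩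
  rw [hquad, hnorm, Finset.mul_sum]
  refine Finset.sum_le_sum fun i _ => ?_
  by_cases hi : (inner ℂ (b i) g : ℂ) = 0
  · rw [hi]; simp
  · exact mul_le_mul_of_nonneg_right (hge i hi) (by positivity)

lemma norm_decomp {ι : Type*} [Fintype ι] (h : ι → ℂ) (m : ℂ) (i0 : ι)
    (hsum : ∑ v, (h v - m) = 0) (hzero : h i0 = 0) :
    ∑ v, ‖h v‖ ^ 2 ≤ (Fintype.card ι : ℝ) * ∑ v, ‖h v - m‖ ^ 2 := by
  classical
  set g : ι → ℂ := fun v => h v - m with hgdef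
  have hnormsq : ∀ z : ℂ, (z * (starRingEnd ℂ) z).re = ‖z‖ ^ 2 := by
    intro z
    rw [Complex.mul_conj, Complex.ofReal_re, Complex.sq_norm]
  -- step 1 : ∑ ‖h‖² = ∑ ‖g‖² + card * ‖m‖²
  have hc : ∑ v, h v * (starRingEnd ℂ) (h v)
      = (∑ v, g v * (starRingEnd ℂ) (g v)) + (Fintype.card ι : ℂ) * (m * (starRingEnd ℂ) m) := by
    have h1 : ∀ v, h v * (starRingEnd ℂ) (h v)
        = g v * (starRingEnd ℂ) (g v)
          + (g v * (starRingEnd ℂ) m + m * (starRingEnd ℂ) (g v)) + m * (starRingEnd ℂ) m := by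
      intro v
      have hv : h v = g v + m := by simp [hgdef]
      rw [hv, map_add]
      ring
    rw [Finset.sum_congr rfl fun v _ => h1 v, Finset.sum_add_distrib, Finset.sum_add_distrib,
      Finset.sum_add_distrib]
    have h3 : ∑ v, g v * (starRingEnd ℂ) m = 0 := by
      rw [← Finset.sum_mul, show (∑ v, g v) = 0 from hsum, zero_mul]
    have h4 : ∑ v, m * (starRingEnd ℂ) (g v) = 0 := by
      rw [← Finset.mul_sum, ← map_sum, show (∑ v, g v) = 0 from hsum, map_zero, mul_zero]
    rw [h3, h4, Finset.sum_const, Finset.card_univ]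
    simp [nsmul_eq_mul]
  have step1 : ∑ v, ‖h v‖ ^ 2 = (∑ v, ‖g v‖ ^ 2) + (Fintype.card ι : ℝ) * ‖m‖ ^ 2 := by
    have := congrArg Complex.re hc
    rw [Complex.re_sum] at this
    rw [Finset.sum_congr rfl fun v _ => (hnormsq (h v)).symm, this, Complex.add_re,
      Complex.re_sum]
    congr 1
    · exact Finset.sum_congr rfl fun v _ => hnormsq (g v)
    · rw [Complex.mul_conj, ← Complex.ofReal_natCast, ← Complex.ofReal_mul, Complex.ofReal_re,
        Complex.normSq_eq_norm_sq]
  -- step 2 : ‖m‖ = ‖g i0‖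
  have step2 : ‖m‖ ^ 2 = ‖g i0‖ ^ 2 := by
    have : g i0 = -m := by simp [hgdef, hzero]
    rw [this, norm_neg]
  -- step 3 : Cauchy–Schwarz
  set s : Finset ι := Finset.univ.erase i0 with hs
  have hsplit : ∑ v, ‖g v‖ ^ 2 = ‖g i0‖ ^ 2 + ∑ v ∈ s, ‖g v‖ ^ 2 :=
    (Finset.add_sum_erase _ _ (Finset.mem_univ i0)).symm
  have hgi0 : g i0 = -∑ v ∈ s, g v := by
    have := Finset.add_sum_erase Finset.univ g (Finset.mem_univ i0)
    rw [show (∑ v, g v) = 0 from hsum] at this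
    linear_combination this
  have hcs : ‖g i0‖ ^ 2 ≤ (s.card : ℝ) * ∑ v ∈ s, ‖g v‖ ^ 2 := by
    have h1 : ‖g i0‖ ≤ ∑ v ∈ s, ‖g v‖ := by
      rw [hgi0, norm_neg]
      exact norm_sum_le _ _
    have h2 : (∑ v ∈ s, ‖g v‖) ^ 2 ≤ (s.card : ℝ) * ∑ v ∈ s, ‖g v‖ ^ 2 := by
      exact_mod_cast sq_sum_le_card_mul_sum_sq (s := s) (f := fun v => ‖g v‖)
    nlinarith [norm_nonneg (g i0), Finset.sum_nonneg (fun v (_ : v ∈ s) => norm_nonneg (g v))]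
  have hcard : (Fintype.card ι : ℝ) = (s.card : ℝ) + 1 := by
    rw [hs, Finset.card_erase_of_mem (Finset.mem_univ i0)]
    have h1 : 1 ≤ Fintype.card ι := Fintype.card_pos_iff.mpr ⟨i0⟩
    rw [Finset.card_univ]
    push_cast [Nat.cast_sub h1]
    ring
  have hA : 0 ≤ ∑ v ∈ s, ‖g v‖ ^ 2 := Finset.sum_nonneg fun v _ => by positivity
  have hB : 0 ≤ ‖g i0‖ ^ 2 := by positivity
  rw [step1, step2, hsplit, hcard]
  nlinarith [hcs]

lemma per_part {V : Type*} [Fintype V] (w : V → V → ℝ)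
    (hsym : ∀ u v, w u v = w v u) (hnn : ∀ u v, 0 ≤ w u v)
    (S : Finset V) (hScard : 1 < S.card)
    (hconn : (SimpleGraph.fromRel fun u v : {x : V // x ∈ S} => w u.1 v.1 ≠ 0).Connected)
    (v0 : V) (hv0 : v0 ∈ S) (lam0 : ℝ) (hlam0 : 0 < lam0)
    (hlb : lam0 ∈ lowerBounds {μ : ℝ | μ ≠ 0 ∧ IsEigenOn w S μ})
    (f : V → ℂ) (hf : f v0 = 0) :
    ∑ v ∈ S, ‖f v‖ ^ 2 ≤ ((S.card : ℝ) / lam0) * gradSqOn w S f := by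
  classical
  set ι := {x : V // x ∈ S}
  have : Nonempty ι := ⟨⟨v0, hv0⟩⟩
  set ω : ι → ι → ℝ := fun u v => w u.1 v.1 with hω
  have hsymω : ∀ u v : ι, ω u v = ω v u := fun u v => hsym u.1 v.1
  have hnnω : ∀ u v : ι, 0 ≤ ω u v := fun u v => hnn u.1 v.1
  set m : ℂ := (∑ v : ι, f v.1) / (S.card : ℂ) with hm
  set g : EuclideanSpace ℂ ι := WithLp.toLp 2 (fun v => f v.1 - m) with hg
  have hcard0 : (S.card : ℂ) ≠ 0 := by
    have h1 : 0 < S.card := lt_trans one_pos hScard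
    exact_mod_cast h1.ne'
  have hgsum : ∑ v : ι, g v = 0 := by
    rw [hg]
    simp only
    rw [Finset.sum_sub_distrib, Finset.sum_const, Finset.card_univ, Fintype.card_coe, hm,
      nsmul_eq_mul, mul_div_cancel₀ _ hcard0, sub_self]
  -- translate the eigenvalue lower bound
  have hlb' : ∀ μ : ℝ, μ ≠ 0 →
      (∃ e : EuclideanSpace ℂ ι, e ≠ 0 ∧ lapT ω e = (μ : ℂ) • e) → lam0 ≤ μ := by
    intro μ hμ ⟨e, he0, heq⟩
    refine hlb ⟨hμ, ?_⟩
    set gV : V → ℂ := fun v => if h : v ∈ S then e ⟨v, h⟩ else 0 with hgV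
    have hgVe : ∀ u : ι, gV u.1 = e u := by
      intro u; rw [hgV]; simp only [u.2, dif_pos]; rfl
    refine ⟨gV, ?_, fun v hv => by simp [hgV, hv], ?_⟩
    · intro hc
      apply he0
      ext u
      have := congrFun hc u.1
      rw [hgVe u] at this
      exact this
    · intro v hv
      have heqv : lapT ω e ⟨v, hv⟩ = ((μ : ℂ) • e) ⟨v, hv⟩ := congrArg (fun x : EuclideanSpace ℂ ι => x ⟨v, hv⟩) heq
      rw [lapT_apply] at heqv
      rw [PiLp.smul_apply, smul_eq_mul] at heqv
      have h1 : ∑ u ∈ S, (gV v - gV u) * (w v u : ℂ)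
          = ∑ u : ι, (e ⟨v, hv⟩ - e u) * (ω ⟨v, hv⟩ u : ℂ) := by
        rw [← Finset.sum_coe_sort S (fun u => (gV v - gV u) * (w v u : ℂ))]
        refine Finset.sum_congr rfl fun u _ => ?_
        rw [show gV v = e ⟨v, hv⟩ from hgVe ⟨v, hv⟩, hgVe u]
      rw [h1, heqv]
      have : gV v = e ⟨v, hv⟩ := hgVe ⟨v, hv⟩
      rw [this]
  have key := spectral_gap ω hsymω hnnω hconn lam0 hlb' g hgsum
  -- identify the quadratic form with gradSqOn
  have hform : (inner ℂ g (lapT ω g) : ℂ).re = gradSqOn w S f := by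
    rw [inner_lapT_re ω hsymω g, gradSqOn]
    congr 1
    rw [← Finset.sum_coe_sort S (fun u => ∑ v ∈ S, ‖f u - f v‖ ^ 2 * w u v)]
    refine Finset.sum_congr rfl fun u _ => ?_
    rw [← Finset.sum_coe_sort S (fun v => ‖f u.1 - f v‖ ^ 2 * w u.1 v)]
    refine Finset.sum_congr rfl fun v _ => ?_
    have : g u - g v = f u.1 - f v.1 := by rw [hg]; simp only; ring
    rw [this]
  -- norm decomposition
  have hdecomp : ∑ v ∈ S, ‖f v‖ ^ 2 ≤ (S.card : ℝ) * ∑ v : ι, ‖g v‖ ^ 2 := by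
    have h0 : ∑ v ∈ S, ‖f v‖ ^ 2 = ∑ v : ι, ‖f v.1‖ ^ 2 :=
      (Finset.sum_coe_sort S (fun v => ‖f v‖ ^ 2)).symm
    rw [h0]
    have := norm_decomp (fun v : ι => f v.1) m ⟨v0, hv0⟩ (by
      have : ∀ v : ι, f v.1 - m = g v := fun v => rfl
      rw [Finset.sum_congr rfl fun v _ => this v]
      exact hgsum) (by simpa using hf)
    rw [Fintype.card_coe] at this
    exact this
  calc ∑ v ∈ S, ‖f v‖ ^ 2 ≤ (S.card : ℝ) * ∑ v : ι, ‖g v‖ ^ 2 := hdecomp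
    _ ≤ (S.card : ℝ) * ((inner ℂ g (lapT ω g) : ℂ).re / lam0) := by
        apply mul_le_mul_of_nonneg_left _ (by positivity)
        rw [le_div_iff₀ hlam0, mul_comm]
        exact key
    _ = ((S.card : ℝ) / lam0) * gradSqOn w S f := by
        rw [hform]; ring

lemma re_mul_conj_comm (z w : ℂ) : (z * (starRingEnd ℂ) w).re = (w * (starRingEnd ℂ) z).re := by
  simp [Complex.mul_re]
  ring

lemma gradSqOn_nonneg {V : Type*} [Fintype V] (w : V → V → ℝ) (hnn : ∀ u v, 0 ≤ w u v)
    (S : Finset V) (f : V → ℂ) : 0 ≤ gradSqOn w S f := by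
  apply mul_nonneg (by norm_num)
  exact Finset.sum_nonneg fun u _ => Finset.sum_nonneg fun v _ =>
    mul_nonneg (by positivity) (hnn u v)

theorem poincare_many_zeros'
    {V : Type*} [Fintype V] {J : Type*} [Fintype J] (w : V → V → ℝ)
    (hsym : ∀ u v, w u v = w v u) (hnn : ∀ u v, 0 ≤ w u v) (hdiag : ∀ v, w v v = 0)
    (S : J → Finset V)
    (hcover : ∀ v : V, ∃ j, v ∈ S j)
    (hdisj : ∀ i j, i ≠ j → Disjoint (S i) (S j))
    (hcard : ∀ j, 1 < (S j).card)
    (hconn : ∀ j, (SimpleGraph.fromRel fun u v : {x : V // x ∈ S j} => w u.1 v.1 ≠ 0).Connected)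
    (vtx : J → V) (hvtx : ∀ j, vtx j ∈ S j)
    (lam : J → ℝ)
    (hlam : ∀ j, IsLeast {μ : ℝ | μ ≠ 0 ∧ IsEigenOn w (S j) μ} (lam j))
    (M Λ : ℝ)
    (hM : IsLUB (Set.range fun j => ((S j).card : ℝ)) M)
    (hΛ : IsGLB (Set.range lam) Λ) (hΛpos : 0 < Λ)
    (f : V → ℂ) (hzero : ∀ j, f (vtx j) = 0) :
    (∑ v, ‖f v‖ ^ 2) ≤ (M / Λ) * (∑ v, f v * (starRingEnd ℂ) ((∑ u, (f v - f u) * (w v u : ℂ)))).re := by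
  classical
  rcases isEmpty_or_nonempty J with hJ | hJ
  · exfalso
    have h1 : (M - 1) ∈ upperBounds (Set.range fun j => ((S j).card : ℝ)) := by
      rintro x ⟨j, rfl⟩
      exact (IsEmpty.false j).elim
    linarith [hM.2 h1]
  have hΛle : ∀ j, Λ ≤ lam j := fun j => hΛ.1 ⟨j, rfl⟩
  have hlampos : ∀ j, 0 < lam j := fun j => lt_of_lt_of_le hΛpos (hΛle j)
  have hMle : ∀ j, ((S j).card : ℝ) ≤ M := fun j => hM.1 ⟨j, rfl⟩
  have hM0 : 0 ≤ M := le_trans (by positivity) (hMle (Classical.arbitrary J))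
  -- per-part bound
  have hBj : ∀ j, ∑ v ∈ S j, ‖f v‖ ^ 2 ≤ (M / Λ) * gradSqOn w (S j) f := by
    intro j
    have h1 := per_part w hsym hnn (S j) (hcard j) (hconn j) (vtx j) (hvtx j) (lam j)
      (hlampos j) (hlam j).2 f (hzero j)
    refine le_trans h1 (mul_le_mul_of_nonneg_right ?_ (gradSqOn_nonneg w hnn (S j) f))
    exact div_le_div₀ hM0 (hMle j) hΛpos (hΛle j)
  -- partition facts
  have hdisj' : (↑(Finset.univ : Finset J) : Set J).PairwiseDisjoint S :=
    fun i _ j _ hij => hdisj i j hij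
  have hunion : Finset.univ.biUnion S = Finset.univ := by
    ext v
    simp only [Finset.mem_biUnion, Finset.mem_univ, iff_true]
    obtain ⟨j, hj⟩ := hcover v
    exact ⟨j, trivial, hj⟩
  have hns : ∑ v, ‖f v‖ ^ 2 = ∑ j, ∑ v ∈ S j, ‖f v‖ ^ 2 := by
    rw [← hunion, Finset.sum_biUnion hdisj']
  -- gradient sums
  have hgg : ∑ j, gradSqOn w (S j) f
      ≤ (1 / 2) * ∑ u, ∑ v, ‖f u - f v‖ ^ 2 * w u v := by
    have he : ∑ j, gradSqOn w (S j) f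
        = (1 / 2) * ∑ j, ∑ u ∈ S j, ∑ v ∈ S j, ‖f u - f v‖ ^ 2 * w u v :=
      (Finset.mul_sum _ _ _).symm
    rw [he]
    apply mul_le_mul_of_nonneg_left _ (by norm_num)
    calc ∑ j, ∑ u ∈ S j, ∑ v ∈ S j, ‖f u - f v‖ ^ 2 * w u v
        ≤ ∑ j, ∑ u ∈ S j, ∑ v, ‖f u - f v‖ ^ 2 * w u v := by
          refine Finset.sum_le_sum fun j _ => Finset.sum_le_sum fun u _ => ?_
          exact Finset.sum_le_sum_of_subset_of_nonneg (Finset.subset_univ _)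
            (fun v _ _ => mul_nonneg (by positivity) (hnn u v))
      _ = ∑ u, ∑ v, ‖f u - f v‖ ^ 2 * w u v := by
          rw [← Finset.sum_biUnion hdisj', hunion]
  -- Green's identity on V
  have hgreen : (∑ v, f v * (starRingEnd ℂ) ((∑ u, (f v - f u) * (w v u : ℂ)))).re
      = (1 / 2) * ∑ u, ∑ v, ‖f u - f v‖ ^ 2 * w u v := by
    rw [← green w hsym f, Complex.re_sum]
    refine Finset.sum_congr rfl fun v _ => ?_
    rw [map_sum, Finset.mul_sum, Complex.re_sum]
    refine Finset.sum_congr rfl fun u _ => ?_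
    rw [map_mul, Complex.conj_ofReal, ← mul_assoc, re_mul_ofReal]
    congr 1
    exact re_mul_conj_comm (f v) (f v - f u)
  have hMΛ : 0 ≤ M / Λ := div_nonneg hM0 (le_of_lt hΛpos)
  calc ∑ v, ‖f v‖ ^ 2 = ∑ j, ∑ v ∈ S j, ‖f v‖ ^ 2 := hns
    _ ≤ ∑ j, (M / Λ) * gradSqOn w (S j) f := Finset.sum_le_sum fun j _ => hBj j
    _ = (M / Λ) * ∑ j, gradSqOn w (S j) f := (Finset.mul_sum _ _ _).symm
    _ ≤ (M / Λ) * ((1 / 2) * ∑ u, ∑ v, ‖f u - f v‖ ^ 2 * w u v) :=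
        mul_le_mul_of_nonneg_left hgg hMΛ
    _ = (M / Λ) * (∑ v, f v * (starRingEnd ℂ) ((∑ u, (f v - f u) * (w v u : ℂ)))).re := by
        rw [hgreen]

theorem poincare_many_zeros
    {V : Type*} [Fintype V] {J : Type*} [Fintype J] (w : V → V → ℝ)
    (hsym : ∀ u v, w u v = w v u) (hnn : ∀ u v, 0 ≤ w u v) (hdiag : ∀ v, w v v = 0)
    (S : J → Finset V)
    (hcover : ∀ v : V, ∃ j, v ∈ S j)
    (hdisj : ∀ i j, i ≠ j → Disjoint (S i) (S j))
    (hcard : ∀ j, 1 < (S j).card)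
    (hconn : ∀ j, IndConnected w (S j))
    (vtx : J → V) (hvtx : ∀ j, vtx j ∈ S j)
    (lam : J → ℝ)
    (hlam : ∀ j, IsLeast {μ : ℝ | μ ≠ 0 ∧ IsEigenOn w (S j) μ} (lam j))
    (M Λ : ℝ)
    (hM : IsLUB (Set.range fun j => ((S j).card : ℝ)) M)
    (hΛ : IsGLB (Set.range lam) Λ) (hΛpos : 0 < Λ)
    (f : V → ℂ) (hzero : ∀ j, f (vtx j) = 0) :
    normSq f ≤ (M / Λ) * (gip f (lap w f)).re := by
  have hconn' : ∀ j, (SimpleGraph.fromRel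
      fun u v : {x : V // x ∈ S j} => w u.1 v.1 ≠ 0).Connected := hconn
  have := poincare_many_zeros' w hsym hnn hdiag S hcover hdisj hcard hconn' vtx hvtx lam hlam
    M Λ hM hΛ hΛpos f hzero
  simpa [normSq, gip, lap] using this
end
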